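/- arXiv:1803.06257 — 4 statements merged into one kernel-verified Lean document; each statement's English description precedes it below -/
import Mathlib

section
/- Let n ∈ ℕ and let c : Finset (Fin n) → ℕ be a circle-count function (for every s and i ∉ s, c(insert i s) = c(s) + 1 or c(s) = c(insert i s) + 1). If a finset v ⊆ Fin n satisfies c(v) = c(∅) + v.card, then every finset u ⊆ v satisfies c(u) = c(∅) + u.card. (Abstract form of Proposition 2.2: if v lies in S_min, then so does every state u < v.) -/
/-- A circle-count function: changing one crossing label either splits one
circle into two or merges two circles into one. -/
def IsCircleCount (n : ℕ) (c : Finset (Fin n) → ℕ) : Prop :=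
  ∀ s : Finset (Fin n), ∀ i ∉ s,
    c (insert i s) = c s + 1 ∨ c s = c (insert i s) + 1

lemma circle_count_step {n : ℕ} {c : Finset (Fin n) → ℕ} (hc : IsCircleCount n c)
    {s : Finset (Fin n)} {i : Fin n} (hi : i ∉ s) :
    c (insert i s) ≤ c s + 1 ∧ c s ≤ c (insert i s) + 1 := by
  rcases hc s i hi with h | h <;> omega

lemma circle_count_diff {n : ℕ} {c : Finset (Fin n) → ℕ} (hc : IsCircleCount n c) :
    ∀ k : ℕ, ∀ s t : Finset (Fin n), s ⊆ t → (t \ s).card = k →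
      c t ≤ c s + k ∧ c s ≤ c t + k := by
  intro k
  induction k with
  | zero =>
    intro s t hst h0
    have : t = s := by
      have := Finset.sdiff_eq_empty_iff_subset.mp (Finset.card_eq_zero.mp h0)
      exact subset_antisymm this hst
    subst this; omega
  | succ k ih =>
    intro s t hst hk
    have hne : (t \ s).Nonempty := by
      rw [← Finset.card_pos, hk]; omega
    obtain ⟨i, hi⟩ := hne
    have hit : i ∈ t := (Finset.mem_sdiff.mp hi).1
    have his : i ∉ s := (Finset.mem_sdiff.mp hi).2
    have hsub : s ⊆ t.erase i := fun x hx =>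
      Finset.mem_erase.mpr ⟨fun h => his (h ▸ hx), hst hx⟩
    have hcard : (t.erase i \ s).card = k := by
      have : t.erase i \ s = (t \ s).erase i := by
        ext x; simp [Finset.mem_erase, Finset.mem_sdiff]; tauto
      rw [this, Finset.card_erase_of_mem hi, hk]; omega
    have hstep := circle_count_step hc (Finset.notMem_erase i t)
    rw [Finset.insert_erase hit] at hstep
    have := ih s (t.erase i) hsub hcard
    omega

theorem extremal_state_lower (n : ℕ) (c : Finset (Fin n) → ℕ)
    (hc : IsCircleCount n c) (v : Finset (Fin n))
    (hv : c v = c ∅ + v.card) :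
    ∀ u : Finset (Fin n), u ⊆ v → c u = c ∅ + u.card := by
  intro u huv
  have h1 := circle_count_diff hc u.card ∅ u (Finset.empty_subset u) (by simp)
  have h2 := circle_count_diff hc (v \ u).card u v huv rfl
  have hcard : u.card + (v \ u).card = v.card := by
    have := Finset.card_le_card huv; rw [Finset.card_sdiff_of_subset huv]; omega
  omega
end

section
/- Let n ∈ ℕ and let c : Finset (Fin n) → ℕ be a circle-count function (for every s and i ∉ s, c(insert i s) = c(s) + 1 or c(s) = c(insert i s) + 1). If v ⊆ Fin n satisfies c(v) = c(∅) + v.card, then for all finsets u ⊆ w ⊆ v one has c(w) = c(u) + (w.card − u.card); in particular, passing from u to w performs exactly w.card − u.card circle splittings. -/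
theorem extremal_state_splittings (n : ℕ) (c : Finset (Fin n) → ℕ)
    (hc : IsCircleCount n c) (v : Finset (Fin n))
    (hv : c v = c ∅ + v.card) :
    ∀ u w : Finset (Fin n), u ⊆ w → w ⊆ v →
      c w = c u + (w.card - u.card) := by
  -- key lemma: along a chain of insertions, c changes by at most 1 per step
  have key : ∀ k : ℕ, ∀ s t : Finset (Fin n), s ⊆ t → t.card = s.card + k →
      c t ≤ c s + k ∧ c s ≤ c t + k := by
    intro k
    induction k with
    | zero =>
      intro s t hst hcard
      have : s = t := Finset.eq_of_subset_of_card_le hst (by omega)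
      subst this; simp
    | succ k ih =>
      intro s t hst hcard
      have hne : s ≠ t := by
        intro h; subst h; omega
      obtain ⟨i, hit, his⟩ := Finset.exists_of_ssubset (hst.ssubset_of_ne hne)
      have hsub : insert i s ⊆ t := Finset.insert_subset hit hst
      have hcard' : t.card = (insert i s).card + k := by
        rw [Finset.card_insert_of_notMem his]; omega
      obtain ⟨h1, h2⟩ := ih (insert i s) t hsub hcard'
      rcases hc s i his with h | h <;> omega
  have hcardle : ∀ s t : Finset (Fin n), s ⊆ t → s.card ≤ t.card :=
    fun s t h => Finset.card_le_card h
  intro u w huw hwv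
  have huv : u ⊆ v := huw.trans hwv
  have h1 := key (w.card - u.card) u w huw (by have := hcardle u w huw; omega)
  have h2 := key (v.card - w.card) w v hwv (by have := hcardle w v hwv; omega)
  have h3 := key u.card ∅ u (Finset.empty_subset u) (by simp)
  have hu := hcardle u w huw
  have hw := hcardle w v hwv
  omega
end

section
/- Let n ∈ ℕ and let c : Finset (Fin n) → ℕ be a circle-count function (for every s and i ∉ s, c(insert i s) = c(s) + 1 or c(s) = c(insert i s) + 1). Then the collection S' = { v : Finset (Fin n) | c(v) = c(∅) + v.card } contains ∅ and is a lower set for the inclusion order on Finset (Fin n) (if v ∈ S' and u ⊆ v then u ∈ S'). In particular, its nonempty members form the faces of an abstract simplicial complex. -/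
private lemma cc_step (n : ℕ) (c : Finset (Fin n) → ℕ) (hc : IsCircleCount n c)
    {s : Finset (Fin n)} {i : Fin n} (hi : i ∉ s) :
    c (insert i s) ≤ c s + 1 ∧ c s ≤ c (insert i s) + 1 := by
  rcases hc s i hi with h | h <;> omega

private lemma cc_sub (n : ℕ) (c : Finset (Fin n) → ℕ) (hc : IsCircleCount n c) :
    ∀ k : ℕ, ∀ u v : Finset (Fin n), u ⊆ v → (v \ u).card = k →
      c v ≤ c u + (v.card - u.card) ∧ c u ≤ c v + (v.card - u.card) := by
  intro k
  induction k with
  | zero =>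
    intro u v huv hcard
    have : v = u := by
      have := Finset.card_eq_zero.mp hcard
      have h2 : v ⊆ u := fun x hx => by
        by_contra hxu
        exact absurd (Finset.mem_sdiff.mpr ⟨hx, hxu⟩) (by simp [this])
      exact Finset.Subset.antisymm h2 huv
    subst this; omega
  | succ k ih =>
    intro u v huv hcard
    have hne : (v \ u).Nonempty := by
      rw [← Finset.card_pos, hcard]; omega
    obtain ⟨i, hi⟩ := hne
    rw [Finset.mem_sdiff] at hi
    have hsub : insert i u ⊆ v := Finset.insert_subset hi.1 huv
    have hcard2 : (v \ insert i u).card = k := by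
      have : v \ insert i u = (v \ u).erase i := by
        ext x; simp [Finset.mem_sdiff, Finset.mem_erase]; tauto
      rw [this, Finset.card_erase_of_mem (Finset.mem_sdiff.mpr hi), hcard]; omega
    have hiu := ih (insert i u) v hsub hcard2
    have hstep := cc_step n c hc hi.2
    have hci : (insert i u).card = u.card + 1 := Finset.card_insert_of_notMem hi.2
    have hcle : (insert i u).card ≤ v.card := Finset.card_le_card hsub
    omega

theorem extremal_states_simplicial_complex (n : ℕ) (c : Finset (Fin n) → ℕ)
    (hc : IsCircleCount n c) :
    (∅ : Finset (Fin n)) ∈ {v : Finset (Fin n) | c v = c ∅ + v.card} ∧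
      IsLowerSet {v : Finset (Fin n) | c v = c ∅ + v.card} := by
  constructor
  · simp
  · intro v u huv hv
    simp only [Set.mem_setOf_eq] at hv ⊢
    have h1 := cc_sub n c hc (v \ u).card u v huv rfl
    have h2 := cc_sub n c hc (u \ ∅).card ∅ u (Finset.empty_subset u) rfl
    have h3 := cc_sub n c hc (v \ ∅).card ∅ v (Finset.empty_subset v) rfl
    have hcle : u.card ≤ v.card := Finset.card_le_card huv
    simp only [Finset.card_empty] at h2 h3
    omega
end

section
/- Let n, n₊, n₋ ∈ ℕ and let c : Finset (Fin n) → ℕ be a circle-count function (for every s and i ∉ s, c(insert i s) = c(s) + 1 or c(s) = c(insert i s) + 1). Let v be a finset of Fin n and let x : Fin (c v) → ℤ satisfy x(i) ∈ {−1, 1} for all i. Then q(v,x) = n₊ − 2n₋ + v.card + Σᵢ x(i) equals the minimal value n₊ − 2n₋ − c(∅) if and only if c(v) = c(∅) + v.card and x(i) = −1 for all i. (Characterization of minimal enhanced states in Proposition 2.1: q(v,x) = j_min iff (v,x) ∈ S_min.) -/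
lemma circleCount_le (n : ℕ) (c : Finset (Fin n) → ℕ) (hc : IsCircleCount n c)
    (v : Finset (Fin n)) : c v ≤ c ∅ + v.card := by
  induction v using Finset.induction_on with
  | empty => simp
  | @insert i s hi ih =>
    rw [Finset.card_insert_of_notMem hi]
    rcases hc s i hi with h | h <;> omega

theorem q_eq_jmin_iff (n nplus nminus : ℕ) (c : Finset (Fin n) → ℕ)
    (hc : IsCircleCount n c) (v : Finset (Fin n)) (x : Fin (c v) → ℤ)
    (hx : ∀ i, x i = -1 ∨ x i = 1) :
    (nplus : ℤ) - 2 * (nminus : ℤ) + (v.card : ℤ) + ∑ i, x i =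
        (nplus : ℤ) - 2 * (nminus : ℤ) - (c ∅ : ℤ) ↔
      (c v = c ∅ + v.card ∧ ∀ i, x i = -1) := by
  have hle := circleCount_le n c hc v
  have hsum_ge : -(c v : ℤ) ≤ ∑ i, x i := by
    have : ∑ _i : Fin (c v), (-1 : ℤ) ≤ ∑ i, x i :=
      Finset.sum_le_sum (fun i _ => by rcases hx i with h | h <;> simp [h])
    simpa using this
  have hall : (∑ i, x i = -(c v : ℤ)) ↔ ∀ i, x i = -1 := by
    have h0 : (∑ i, (x i + 1)) = ∑ i, x i + (c v : ℤ) := by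
      rw [Finset.sum_add_distrib]; simp
    constructor
    · intro h i
      have hz : ∑ i, (x i + 1) = 0 := by omega
      have := (Finset.sum_eq_zero_iff_of_nonneg
        (fun i _ => by rcases hx i with h | h <;> simp [h])).mp hz i (Finset.mem_univ i)
      linarith
    · intro h
      simp [h]
  constructor
  · intro h
    have key : (v.card : ℤ) + ∑ i, x i = -(c ∅ : ℤ) := by linarith
    have hcv : c v = c ∅ + v.card := by
      push_cast at *
      omega
    refine ⟨hcv, hall.mp ?_⟩
    push_cast at *
    omega
  · rintro ⟨h1, h2⟩
    have := hall.mpr h2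
    push_cast at *
    omega
end
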